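/- For every q ≥ 1 (with q + 1 ≤ dim K), the up discriminant D_q^up does not have −1 as an eigenvalue: there is no nonzero g ∈ ℓ²(K_q) with D_q^up g = −g. -/

import Mathlib

open scoped BigOperators

/-- The set of oriented `q`-simplices of a simplicial complex, together with the
orientation-reversal involution `bar` (writing `τ̄` for `bar τ`). -/
structure OrientedSet where
  K : Type
  bar : K → K
  bar_invol : ∀ τ, bar (bar τ) = τ
  bar_ne : ∀ τ, bar τ ≠ τ

/-- The data of an up graph (`mult = 2(q+1)`) or a down graph (`mult = 2`) on the set of
oriented `q`-simplices: the sign function `η` (extended by `0` off the edge set, so that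
`(τ₁, τ₂)` is an edge iff `eta τ₁ τ₂ ≠ 0`), the degree function (`deg_X`, resp. `deg_Y`),
and local finiteness; the degree of a vertex `τ` in the graph is `mult * deg τ`. -/
structure GroverStructure (O : OrientedSet) where
  eta : O.K → O.K → ℝ
  eta_symm : ∀ τ₁ τ₂, eta τ₁ τ₂ = eta τ₂ τ₁
  eta_vals : ∀ τ₁ τ₂, eta τ₁ τ₂ = 0 ∨ eta τ₁ τ₂ = 1 ∨ eta τ₁ τ₂ = -1
  eta_bar_left : ∀ τ₁ τ₂, eta (O.bar τ₁) τ₂ = - eta τ₁ τ₂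
  eta_self : ∀ τ, eta τ τ = 0
  eta_bar_self : ∀ τ, eta τ (O.bar τ) = 0
  deg : O.K → ℕ
  deg_pos : ∀ τ, 0 < deg τ
  deg_bar : ∀ τ, deg (O.bar τ) = deg τ
  mult : ℕ
  nbhdFinite : ∀ τ, {τ' | eta τ τ' ≠ 0}.Finite
  nbhd_card : ∀ τ, (nbhdFinite τ).toFinset.card = mult * deg τ

namespace GroverStructure

variable {O : OrientedSet} (Y : GroverStructure O)

/-- `(τ₁, τ₂)` is an oriented edge of the up/down graph. -/
def Edge (τ₁ τ₂ : O.K) : Prop := Y.eta τ₁ τ₂ ≠ 0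

/-- The normalization constant `(mult * deg τ)^(-1/2)`. -/
noncomputable def c (τ : O.K) : ℂ := ((Real.sqrt (Y.mult * Y.deg τ) : ℝ) : ℂ)⁻¹

/-- The operator `d : ℓ²(E) → ℓ²(K)`; elements of `ℓ²(E)` are represented as
functions on `K × K` (supported on the set of edges). -/
noncomputable def d (g : O.K × O.K → ℂ) : O.K → ℂ :=
  fun τ => Y.c τ * ∑ᶠ τ' ∈ {τ' | Y.eta τ τ' ≠ 0}, g (τ, τ')

/-- The adjoint `d* : ℓ²(K) → ℓ²(E)`. -/
noncomputable def dstar (f : O.K → ℂ) : O.K × O.K → ℂ :=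
  fun p => if Y.eta p.1 p.2 ≠ 0 then Y.c p.1 * f p.1 else 0

/-- The shift operator `(S g)(τ₁,τ₂) = η(τ₁,τ₂) • g(τ₂,τ₁)`. -/
noncomputable def shift (g : O.K × O.K → ℂ) : O.K × O.K → ℂ :=
  fun p => (Y.eta p.1 p.2 : ℂ) * g (p.2, p.1)

/-- The discriminant operator `D = d ∘ S ∘ d*`. -/
noncomputable def disc (f : O.K → ℂ) : O.K → ℂ := Y.d (Y.shift (Y.dstar f))

/-- The Grover walk `U = S (2 d* d − I)`. -/
noncomputable def walk (g : O.K × O.K → ℂ) : O.K × O.K → ℂ :=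
  Y.shift (fun p => 2 * Y.dstar (Y.d g) p - g p)

/-- Membership in `ℓ²(E)`: square summable and supported on the edge set. -/
def MemEdge (g : O.K × O.K → ℂ) : Prop :=
  Memℓp g 2 ∧ ∀ p : O.K × O.K, ¬ Y.Edge p.1 p.2 → g p = 0

end GroverStructure

/-- The orthogonal projection of `ℓ²(K_q)` onto the cochain space
`C^q(K,ℂ) = {f : f(τ̄) = -f(τ)}`. -/
noncomputable def projC (O : OrientedSet) (f : O.K → ℂ) : O.K → ℂ :=
  fun τ => (f τ - f (O.bar τ)) / 2

/-- The incidence signs `sgn(σ,τ)` between oriented simplices of two consecutive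
dimensions (`Olow` models `K_q`, `Ohigh` models `K_{q+1}`): `sgn σ τ ∈ {±1}` if the
underlying simplex `[τ]` is a face of `[σ]`, and `sgn σ τ = 0` otherwise. -/
structure SgnPair (Olow Ohigh : OrientedSet) where
  sgn : Ohigh.K → Olow.K → ℝ
  sgn_vals : ∀ σ τ, sgn σ τ = 0 ∨ sgn σ τ = 1 ∨ sgn σ τ = -1
  sgn_bar_left : ∀ σ τ, sgn (Ohigh.bar σ) τ = - sgn σ τ
  sgn_bar_right : ∀ σ τ, sgn σ (Olow.bar τ) = - sgn σ τ
  facesFinite : ∀ σ, {τ | sgn σ τ ≠ 0}.Finite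
  cofacesFinite : ∀ τ, {σ | sgn σ τ ≠ 0}.Finite

namespace SgnPair

variable {Olow Ohigh : OrientedSet} (P : SgnPair Olow Ohigh)

/-- The coboundary operator `(δ_q f)(σ) = (1/2) ∑_{τ ∈ K_q} sgn(σ,τ) f(τ)`. -/
noncomputable def delta (f : Olow.K → ℂ) : Ohigh.K → ℂ :=
  fun σ => (1 / 2 : ℂ) * ∑ᶠ τ, (P.sgn σ τ : ℂ) * f τ

/-- The adjoint coboundary `(δ_q* g)(τ) = (1/2) ∑_{σ ∈ K_{q+1}} sgn(σ,τ) g(σ)`. -/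
noncomputable def deltaStar (g : Ohigh.K → ℂ) : Olow.K → ℂ :=
  fun τ => (1 / 2 : ℂ) * ∑ᶠ σ, (P.sgn σ τ : ℂ) * g σ

end SgnPair

/-- The Grover structure `X` is the up graph structure at level `q` induced by the
incidence signs into level `q+1`: two oriented `q`-simplices span an edge iff their
underlying simplices are distinct up neighbors, `η^up(τ₁,τ₂) = sgn(σ,τ₁)·sgn(σ,τ₂)`
for (either orientation of) the common `(q+1)`-simplex `σ`, and `deg_X τ` is the number
of `(q+1)`-simplices containing `[τ]` as a face (each such simplex having exactly two
orientations). -/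
def GroverStructure.IsUpOf {O Oup : OrientedSet} (X : GroverStructure O)
    (P : SgnPair O Oup) : Prop :=
  (∀ τ₁ τ₂ : O.K, X.eta τ₁ τ₂ ≠ 0 ↔
      τ₁ ≠ τ₂ ∧ τ₁ ≠ O.bar τ₂ ∧ ∃ σ, P.sgn σ τ₁ ≠ 0 ∧ P.sgn σ τ₂ ≠ 0) ∧
  (∀ τ₁ τ₂ σ, τ₁ ≠ τ₂ → τ₁ ≠ O.bar τ₂ → P.sgn σ τ₁ ≠ 0 → P.sgn σ τ₂ ≠ 0 →
      X.eta τ₁ τ₂ = P.sgn σ τ₁ * P.sgn σ τ₂) ∧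
  (∀ τ, (P.cofacesFinite τ).toFinset.card = 2 * X.deg τ)

/-- The Grover structure `Y` is the down graph structure at level `q+1` induced by the
incidence signs from level `q`: two oriented `(q+1)`-simplices span an edge iff their
underlying simplices are distinct down neighbors, and
`η^down(σ₁,σ₂) = sgn(σ₁,μ)·sgn(σ₂,μ)` for (either orientation of) a common face `μ`. -/
def GroverStructure.IsDownOf {Odn O : OrientedSet} (Y : GroverStructure O)
    (P : SgnPair Odn O) : Prop :=
  (∀ σ₁ σ₂ : O.K, Y.eta σ₁ σ₂ ≠ 0 ↔
      σ₁ ≠ σ₂ ∧ σ₁ ≠ O.bar σ₂ ∧ ∃ μ, P.sgn σ₁ μ ≠ 0 ∧ P.sgn σ₂ μ ≠ 0) ∧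
  (∀ σ₁ σ₂ μ, σ₁ ≠ σ₂ → σ₁ ≠ O.bar σ₂ → P.sgn σ₁ μ ≠ 0 → P.sgn σ₂ μ ≠ 0 →
      Y.eta σ₁ σ₂ = P.sgn σ₁ μ * P.sgn σ₂ μ)

/-- For `q ≥ 1`, the up discriminant `D_q^up` does not have `−1`
as an eigenvalue. -/


private lemma conj_mul_self_re (z : ℂ) : ((starRingEnd ℂ) z * z).re = ‖z‖ ^ 2 := by
  rw [Complex.sq_norm]
  simp [Complex.normSq_apply, Complex.mul_re]

private lemma norm_sq_expand (r s e : ℝ) (he : e = 1 ∨ e = -1) (a b : ℂ) :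
    ‖(r : ℂ) * a + (e : ℂ) * ((s : ℂ) * b)‖ ^ 2
      = r ^ 2 * ‖a‖ ^ 2 + s ^ 2 * ‖b‖ ^ 2
        + 2 * ((starRingEnd ℂ) a * ((e : ℂ) * ((r : ℂ) * ((s : ℂ) * b)))).re := by
  have he2 : e ^ 2 = 1 := by rcases he with h | h <;> rw [h] <;> ring
  simp only [Complex.sq_norm, Complex.normSq_apply,
    Complex.add_re, Complex.add_im, Complex.mul_re, Complex.mul_im,
    Complex.ofReal_re, Complex.ofReal_im, Complex.conj_re, Complex.conj_im]
  linear_combination (s ^ 2 * (b.re ^ 2 + b.im ^ 2)) * he2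

private lemma re_bound (r s e : ℝ) (he : e = 1 ∨ e = -1) (a b : ℂ) :
    |((starRingEnd ℂ) a * ((e : ℂ) * ((r : ℂ) * ((s : ℂ) * b)))).re|
      ≤ (r ^ 2 * ‖a‖ ^ 2 + s ^ 2 * ‖b‖ ^ 2) / 2 := by
  have h1 := Complex.abs_re_le_norm ((starRingEnd ℂ) a * ((e : ℂ) * ((r : ℂ) * ((s : ℂ) * b))))
  have he1 : |e| = 1 := by rcases he with h | h <;> rw [h] <;> norm_num
  have h2 : ‖(starRingEnd ℂ) a * ((e : ℂ) * ((r : ℂ) * ((s : ℂ) * b)))‖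
      = ‖a‖ * (|r| * (|s| * ‖b‖)) := by
    simp [he1]
  rw [h2] at h1
  nlinarith [sq_nonneg (|r| * ‖a‖ - |s| * ‖b‖), sq_abs r, sq_abs s,
    abs_nonneg r, abs_nonneg s, norm_nonneg a, norm_nonneg b,
    mul_nonneg (mul_nonneg (abs_nonneg r) (abs_nonneg s)) (mul_nonneg (norm_nonneg a) (norm_nonneg b))]


theorem disc_up_has_no_eigenvalue_neg_one (q : ℕ) (hq : 1 ≤ q)
    (O Oup : OrientedSet) (P : SgnPair O Oup)
    (X : GroverStructure O) (hXm : X.mult = 2 * (q + 1)) (hX : X.IsUpOf P) :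
    ¬ ∃ g : O.K → ℂ, Memℓp g 2 ∧ g ≠ 0 ∧ X.disc g = fun τ => - g τ := by
  classical
  rintro ⟨g, hg2, hgne, heig⟩
  obtain ⟨hEdgeIff, hEdgeEta, hCard⟩ := hX
  -- basic quantities
  set rc : O.K → ℝ := fun τ => (Real.sqrt (X.mult * X.deg τ))⁻¹ with hrc_def
  have hmd : ∀ τ, (0 : ℝ) < (X.mult : ℝ) * (X.deg τ : ℝ) := by
    intro τ
    have h1 : 0 < X.mult := by rw [hXm]; positivity
    have h2 := X.deg_pos τ
    positivity
  have hrc_pos : ∀ τ, 0 < rc τ := by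
    intro τ
    have := hmd τ
    rw [hrc_def]
    simp only
    rw [inv_pos]
    exact Real.sqrt_pos.2 (by linarith)
  have hrc_sq : ∀ τ, rc τ ^ 2 = ((X.mult : ℝ) * (X.deg τ : ℝ))⁻¹ := by
    intro τ
    have h := hmd τ
    rw [hrc_def]
    simp only
    rw [inv_pow, Real.sq_sqrt (le_of_lt h)]
  have hc : ∀ τ, X.c τ = ((rc τ : ℝ) : ℂ) := by
    intro τ
    rw [GroverStructure.c, hrc_def]
    push_cast
    ring
  have hηpm : ∀ τ τ', X.eta τ τ' ≠ 0 → X.eta τ τ' = 1 ∨ X.eta τ τ' = -1 := by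
    intro τ τ' h
    rcases X.eta_vals τ τ' with h0 | h1 | h2
    · exact absurd h0 h
    · exact Or.inl h1
    · exact Or.inr h2
  -- neighbor finsets
  set N : O.K → Finset O.K := fun τ => (X.nbhdFinite τ).toFinset with hN_def
  have hNmem : ∀ τ τ', τ' ∈ N τ ↔ X.eta τ τ' ≠ 0 := by
    intro τ τ'
    rw [hN_def]
    simp [Set.Finite.mem_toFinset]
  -- the discriminant as a finite sum
  have hdisc : ∀ τ, X.disc g τ =
      ∑ τ' ∈ N τ, ((X.eta τ τ' : ℝ) : ℂ) * ((rc τ : ℂ) * ((rc τ' : ℂ) * g τ')) := by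
    intro τ
    show X.c τ * ∑ᶠ τ' ∈ {τ' | X.eta τ τ' ≠ 0}, X.shift (X.dstar g) (τ, τ') = _
    rw [finsum_mem_eq_finite_toFinset_sum _ (X.nbhdFinite τ), Finset.mul_sum]
    apply Finset.sum_congr rfl
    intro τ' hτ'
    have hmem : X.eta τ τ' ≠ 0 := (hNmem τ τ').1 hτ'
    have hsymm : X.eta τ' τ ≠ 0 := by rw [X.eta_symm]; exact hmem
    show X.c τ * ((X.eta τ τ' : ℝ) * (if X.eta τ' τ ≠ 0 then X.c τ' * g τ' else 0)) = _
    rw [if_pos hsymm, hc, hc]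
    ring
  -- square-summability of g
  have hsq : Summable (fun τ => ‖g τ‖ ^ 2) := by
    have h0 : (0 : ℝ) < (2 : ENNReal).toReal := by norm_num
    have h := (memℓp_gen_iff h0).1 hg2
    have heq : (fun τ => ‖g τ‖ ^ (2 : ENNReal).toReal) = fun τ => ‖g τ‖ ^ 2 := by
      funext τ
      rw [show (2 : ENNReal).toReal = ((2 : ℕ) : ℝ) by norm_num, Real.rpow_natCast]
    rwa [heq] at h
  -- the three summable families
  set A : O.K × O.K → ℝ :=
    fun p => if X.eta p.1 p.2 ≠ 0 then rc p.1 ^ 2 * ‖g p.1‖ ^ 2 else 0 with hA_def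
  have hA_nonneg : ∀ p, 0 ≤ A p := by
    intro p
    rw [hA_def]
    dsimp only
    split
    · positivity
    · exact le_refl 0
  have hA_rowsupp : ∀ τ τ', τ' ∉ N τ → A (τ, τ') = 0 := by
    intro τ τ' h
    have : ¬ X.eta τ τ' ≠ 0 := fun hc => h ((hNmem τ τ').2 hc)
    rw [hA_def]
    exact if_neg this
  have hA_row_summable : ∀ τ, Summable fun τ' => A (τ, τ') := by
    intro τ
    exact summable_of_ne_finset_zero (s := N τ) (hA_rowsupp τ)
  have hA_row_sum : ∀ τ, ∑' τ', A (τ, τ') = ‖g τ‖ ^ 2 := by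
    intro τ
    rw [tsum_eq_sum (s := N τ) (hA_rowsupp τ)]
    have hval : ∀ τ' ∈ N τ, A (τ, τ') = rc τ ^ 2 * ‖g τ‖ ^ 2 := by
      intro τ' h
      rw [hA_def]
      exact if_pos ((hNmem τ τ').1 h)
    rw [Finset.sum_congr rfl hval, Finset.sum_const, X.nbhd_card τ, nsmul_eq_mul, hrc_sq]
    have h := hmd τ
    push_cast
    field_simp
    exact mul_div_cancel_left₀ _ h.ne'
  have hA_sum : Summable A :=
    (summable_prod_of_nonneg hA_nonneg).2
      ⟨hA_row_summable, by
        apply Summable.congr hsq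
        intro τ
        exact (hA_row_sum τ).symm⟩
  have hA_tsum : ∑' p, A p = ∑' τ, ‖g τ‖ ^ 2 := by
    rw [Summable.tsum_prod' hA_sum hA_row_summable]
    exact tsum_congr hA_row_sum
  -- the swapped family
  set A' : O.K × O.K → ℝ := fun p => A p.swap with hA'_def
  have hA'_sum : Summable A' := hA_sum.prod_symm
  have hA'_tsum : ∑' p, A' p = ∑' τ, ‖g τ‖ ^ 2 := by
    rw [← hA_tsum, hA'_def]
    exact (Equiv.prodComm O.K O.K).tsum_eq A
  -- the cross terms
  set F : O.K × O.K → ℝ := fun p =>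
    ((starRingEnd ℂ) (g p.1) *
      (((X.eta p.1 p.2 : ℝ) : ℂ) * ((rc p.1 : ℂ) * ((rc p.2 : ℂ) * g p.2)))).re with hF_def
  have hF_rowsupp : ∀ τ τ', τ' ∉ N τ → F (τ, τ') = 0 := by
    intro τ τ' h
    have h0 : X.eta τ τ' = 0 := by
      by_contra hc
      exact h ((hNmem τ τ').2 hc)
    rw [hF_def]
    simp [h0]
  have hF_row_summable : ∀ τ, Summable fun τ' => F (τ, τ') := by
    intro τ
    exact summable_of_ne_finset_zero (s := N τ) (hF_rowsupp τ)
  have hF_row_sum : ∀ τ, ∑' τ', F (τ, τ') = -‖g τ‖ ^ 2 := by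
    intro τ
    rw [tsum_eq_sum (s := N τ) (hF_rowsupp τ)]
    have : ∑ τ' ∈ N τ, F (τ, τ') = ((starRingEnd ℂ) (g τ) * X.disc g τ).re := by
      rw [hdisc, Finset.mul_sum, Complex.re_sum]
    rw [this, heig]
    simp only
    rw [mul_neg, Complex.neg_re, conj_mul_self_re]
  have hF_bound : ∀ p, |F p| ≤ (A p + A' p) / 2 := by
    intro p
    by_cases h : X.eta p.1 p.2 = 0
    · rw [hF_def]
      simp only [h]
      have hA0 : A p = 0 := by rw [hA_def]; exact if_neg (by simp [h])
      have hA'0 : A' p = 0 := by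
        rw [hA'_def, hA_def]
        have : X.eta p.2 p.1 = 0 := by rw [X.eta_symm]; exact h
        simp only
        exact if_neg (by simp [Prod.fst_swap, Prod.snd_swap, this])
      rw [hA0, hA'0]
      simp
    · have hA1 : A p = rc p.1 ^ 2 * ‖g p.1‖ ^ 2 := by rw [hA_def]; exact if_pos h
      have h' : X.eta p.2 p.1 ≠ 0 := by rw [X.eta_symm]; exact h
      have hA'1 : A' p = rc p.2 ^ 2 * ‖g p.2‖ ^ 2 := by
        rw [hA'_def, hA_def]
        simp only [Prod.fst_swap, Prod.snd_swap]
        exact if_pos h'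
      rw [hA1, hA'1, hF_def]
      exact re_bound (rc p.1) (rc p.2) (X.eta p.1 p.2) (hηpm _ _ h) (g p.1) (g p.2)
  have hF_sum : Summable F := by
    apply Summable.of_norm_bounded (g := fun p => (A p + A' p) / 2)
      ((hA_sum.add hA'_sum).div_const 2)
    intro p
    rw [Real.norm_eq_abs]
    exact hF_bound p
  have hF_tsum : ∑' p, F p = -∑' τ, ‖g τ‖ ^ 2 := by
    rw [Summable.tsum_prod' hF_sum hF_row_summable]
    rw [tsum_congr hF_row_sum]
    exact tsum_neg
  -- the edge quadratic form
  set T : O.K × O.K → ℝ := fun p =>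
    if X.eta p.1 p.2 ≠ 0 then
      ‖(rc p.1 : ℂ) * g p.1 + ((X.eta p.1 p.2 : ℝ) : ℂ) * ((rc p.2 : ℂ) * g p.2)‖ ^ 2
    else 0 with hT_def
  have hT_nonneg : ∀ p, 0 ≤ T p := by
    intro p
    rw [hT_def]
    dsimp only
    split
    · positivity
    · exact le_refl 0
  have hT_eq : ∀ p, T p = A p + A' p + 2 * F p := by
    intro p
    by_cases h : X.eta p.1 p.2 = 0
    · have hA0 : A p = 0 := by rw [hA_def]; exact if_neg (by simp [h])
      have hA'0 : A' p = 0 := by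
        rw [hA'_def, hA_def]
        have h2 : X.eta p.2 p.1 = 0 := by rw [X.eta_symm]; exact h
        simp only [Prod.fst_swap, Prod.snd_swap]
        exact if_neg (by simp [h2])
      have hF0 : F p = 0 := by rw [hF_def]; simp [h]
      rw [hT_def]
      simp only [h]
      rw [hA0, hA'0, hF0]
      simp
    · have h' : X.eta p.2 p.1 ≠ 0 := by rw [X.eta_symm]; exact h
      have hA1 : A p = rc p.1 ^ 2 * ‖g p.1‖ ^ 2 := by rw [hA_def]; exact if_pos h
      have hA'1 : A' p = rc p.2 ^ 2 * ‖g p.2‖ ^ 2 := by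
        rw [hA'_def, hA_def]
        simp only [Prod.fst_swap, Prod.snd_swap]
        exact if_pos h'
      rw [hT_def]
      simp only [if_pos h]
      rw [hA1, hA'1, hF_def]
      exact norm_sq_expand (rc p.1) (rc p.2) (X.eta p.1 p.2) (hηpm _ _ h) (g p.1) (g p.2)
  have hT_sum : Summable T := by
    apply Summable.congr ((hA_sum.add hA'_sum).add (hF_sum.mul_left 2))
    intro p
    exact (hT_eq p).symm
  have hT_tsum : ∑' p, T p = 0 := by
    rw [tsum_congr hT_eq]
    rw [Summable.tsum_add (hA_sum.add hA'_sum) (hF_sum.mul_left 2),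
      Summable.tsum_add hA_sum hA'_sum, tsum_mul_left, hA_tsum, hA'_tsum, hF_tsum]
    ring
  have hT_zero : ∀ p, T p = 0 := by
    intro p
    have h1 : T p ≤ ∑' p, T p := Summable.le_tsum hT_sum p (fun q _ => hT_nonneg q)
    rw [hT_tsum] at h1
    exact le_antisymm h1 (hT_nonneg p)
  -- the edge relations
  have hrel : ∀ τ τ', X.eta τ τ' ≠ 0 →
      (rc τ : ℂ) * g τ + ((X.eta τ τ' : ℝ) : ℂ) * ((rc τ' : ℂ) * g τ') = 0 := by
    intro τ τ' h
    have h1 := hT_zero (τ, τ')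
    rw [hT_def] at h1
    simp only [if_pos h] at h1
    have h2 : ‖(rc τ : ℂ) * g τ + ((X.eta τ τ' : ℝ) : ℂ) * ((rc τ' : ℂ) * g τ')‖ = 0 := by
      nlinarith [norm_nonneg ((rc τ : ℂ) * g τ + ((X.eta τ τ' : ℝ) : ℂ) * ((rc τ' : ℂ) * g τ'))]
    exact norm_eq_zero.1 h2
  -- combinatorial part
  obtain ⟨τ₀, hτ₀⟩ := Function.ne_iff.1 hgne
  have hτ₀' : g τ₀ ≠ 0 := by simpa using hτ₀
  set C : Finset Oup.K := (P.cofacesFinite τ₀).toFinset with hC_def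
  have hCmem : ∀ σ, σ ∈ C ↔ P.sgn σ τ₀ ≠ 0 := by
    intro σ
    rw [hC_def]
    simp [Set.Finite.mem_toFinset]
  have hCcard : C.card = 2 * X.deg τ₀ := hCard τ₀
  have hNcard : (N τ₀).card = X.mult * X.deg τ₀ := X.nbhd_card τ₀
  -- double counting: some coface has at least 3 neighbor faces
  have hkey : ∃ σ ∈ C, 3 ≤ ((N τ₀).filter (fun τ' => P.sgn σ τ' ≠ 0)).card := by
    by_contra hcon
    push_neg at hcon
    have hswap : ∑ τ' ∈ N τ₀, ((C.filter (fun σ => P.sgn σ τ' ≠ 0)).card)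
        = ∑ σ ∈ C, (((N τ₀).filter (fun τ' => P.sgn σ τ' ≠ 0)).card) := by
      have e1 : ∀ (s : Finset Oup.K) (τ' : O.K),
          (s.filter (fun σ => P.sgn σ τ' ≠ 0)).card
            = ∑ σ ∈ s, if P.sgn σ τ' ≠ 0 then 1 else 0 := by
        intro s τ'
        rw [Finset.card_eq_sum_ones, Finset.sum_filter]
      have e2 : ∀ (s : Finset O.K) (σ : Oup.K),
          (s.filter (fun τ' => P.sgn σ τ' ≠ 0)).card
            = ∑ τ' ∈ s, if P.sgn σ τ' ≠ 0 then 1 else 0 := by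
        intro s σ
        rw [Finset.card_eq_sum_ones, Finset.sum_filter]
      simp only [e1, e2]
      exact Finset.sum_comm
    have hlow : ∀ τ' ∈ N τ₀, 2 ≤ (C.filter (fun σ => P.sgn σ τ' ≠ 0)).card := by
      intro τ' hτ'
      have hη := (hNmem τ₀ τ').1 hτ'
      obtain ⟨_, _, σ, hσ0, hστ'⟩ := (hEdgeIff τ₀ τ').1 hη
      have hσC : σ ∈ C.filter (fun σ => P.sgn σ τ' ≠ 0) := by
        rw [Finset.mem_filter]
        exact ⟨(hCmem σ).2 hσ0, hστ'⟩
      have hbσC : Oup.bar σ ∈ C.filter (fun σ => P.sgn σ τ' ≠ 0) := by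
        rw [Finset.mem_filter]
        constructor
        · apply (hCmem _).2
          rw [P.sgn_bar_left]
          simpa using hσ0
        · rw [P.sgn_bar_left]
          simpa using hστ'
      have hsub : ({σ, Oup.bar σ} : Finset Oup.K) ⊆ C.filter (fun σ => P.sgn σ τ' ≠ 0) := by
        intro x hx
        rcases Finset.mem_insert.1 hx with h | h
        · exact h ▸ hσC
        · exact (Finset.mem_singleton.1 h) ▸ hbσC
      have hcard2 : ({σ, Oup.bar σ} : Finset Oup.K).card = 2 := by
        rw [Finset.card_insert_of_notMem (by simp [(Oup.bar_ne σ).symm]), Finset.card_singleton]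
      calc 2 = ({σ, Oup.bar σ} : Finset Oup.K).card := hcard2.symm
        _ ≤ _ := Finset.card_le_card hsub
    have h1 : 2 * (N τ₀).card ≤ ∑ τ' ∈ N τ₀, ((C.filter (fun σ => P.sgn σ τ' ≠ 0)).card) := by
      calc 2 * (N τ₀).card = ∑ _τ' ∈ N τ₀, 2 := by
            rw [Finset.sum_const, smul_eq_mul, mul_comm]
        _ ≤ _ := Finset.sum_le_sum hlow
    have h2 : ∑ σ ∈ C, (((N τ₀).filter (fun τ' => P.sgn σ τ' ≠ 0)).card) ≤ 2 * C.card := by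
      calc ∑ σ ∈ C, (((N τ₀).filter (fun τ' => P.sgn σ τ' ≠ 0)).card)
          ≤ ∑ _σ ∈ C, 2 := Finset.sum_le_sum (fun σ hσ => by
            have := hcon σ hσ
            omega)
        _ = 2 * C.card := by rw [Finset.sum_const, smul_eq_mul, mul_comm]
    rw [hswap] at h1
    rw [hNcard, hCcard, hXm] at *
    have hd := X.deg_pos τ₀
    have := le_trans h1 h2
    nlinarith [X.deg_pos τ₀]
  obtain ⟨σ, hσC, hσ3⟩ := hkey
  have hσ0 : P.sgn σ τ₀ ≠ 0 := (hCmem σ).1 hσC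
  set Fσ : Finset O.K := (N τ₀).filter (fun τ' => P.sgn σ τ' ≠ 0) with hFσ_def
  obtain ⟨τ₁, hτ₁⟩ := Finset.card_pos.1 (by omega : 0 < Fσ.card)
  have hsd : 1 ≤ (Fσ \ {τ₁, O.bar τ₁}).card := by
    have hle : ({τ₁, O.bar τ₁} : Finset O.K).card ≤ 2 := by
      apply le_trans (Finset.card_insert_le _ _)
      simp
    have := Finset.le_card_sdiff ({τ₁, O.bar τ₁} : Finset O.K) Fσ
    omega
  obtain ⟨τ₂, hτ₂⟩ := Finset.card_pos.1 (by omega : 0 < (Fσ \ ({τ₁, O.bar τ₁} : Finset O.K)).card)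
  rw [Finset.mem_sdiff] at hτ₂
  obtain ⟨hτ₂F, hτ₂ne⟩ := hτ₂
  have hτ₂ne1 : τ₂ ≠ τ₁ := fun h => hτ₂ne (by simp [h])
  have hτ₂nebar : τ₂ ≠ O.bar τ₁ := fun h => hτ₂ne (by simp [h])
  -- unpack memberships
  rw [hFσ_def, Finset.mem_filter] at hτ₁ hτ₂F
  obtain ⟨hτ₁N, hs₁⟩ := hτ₁
  obtain ⟨hτ₂N, hs₂⟩ := hτ₂F
  have hη01 : X.eta τ₀ τ₁ ≠ 0 := (hNmem τ₀ τ₁).1 hτ₁N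
  have hη02 : X.eta τ₀ τ₂ ≠ 0 := (hNmem τ₀ τ₂).1 hτ₂N
  obtain ⟨hne01, hnb01, -⟩ := (hEdgeIff τ₀ τ₁).1 hη01
  obtain ⟨hne02, hnb02, -⟩ := (hEdgeIff τ₀ τ₂).1 hη02
  have hnb12 : τ₁ ≠ O.bar τ₂ := by
    intro h
    apply hτ₂nebar
    rw [h, O.bar_invol]
  have hη12 : X.eta τ₁ τ₂ ≠ 0 :=
    (hEdgeIff τ₁ τ₂).2 ⟨hτ₂ne1.symm, hnb12, σ, hs₁, hs₂⟩
  -- eta values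
  have he01 : X.eta τ₀ τ₁ = P.sgn σ τ₀ * P.sgn σ τ₁ := hEdgeEta τ₀ τ₁ σ hne01 hnb01 hσ0 hs₁
  have he02 : X.eta τ₀ τ₂ = P.sgn σ τ₀ * P.sgn σ τ₂ := hEdgeEta τ₀ τ₂ σ hne02 hnb02 hσ0 hs₂
  have he12 : X.eta τ₁ τ₂ = P.sgn σ τ₁ * P.sgn σ τ₂ :=
    hEdgeEta τ₁ τ₂ σ hτ₂ne1.symm hnb12 hs₁ hs₂
  -- sign values
  have hs₁sq : P.sgn σ τ₁ ^ 2 = 1 := by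
    rcases P.sgn_vals σ τ₁ with h | h | h
    · exact absurd h hs₁
    · rw [h]; ring
    · rw [h]; ring
  -- the three relations
  have r01 := hrel τ₀ τ₁ hη01
  have r02 := hrel τ₀ τ₂ hη02
  have r12 := hrel τ₁ τ₂ hη12
  rw [he01] at r01
  rw [he02] at r02
  rw [he12] at r12
  set v₀ : ℂ := (rc τ₀ : ℂ) * g τ₀ with hv₀
  set v₁ : ℂ := (rc τ₁ : ℂ) * g τ₁ with hv₁
  set v₂ : ℂ := (rc τ₂ : ℂ) * g τ₂ with hv₂
  push_cast at r01 r02 r12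
  have hs₁sqC : ((P.sgn σ τ₁ : ℝ) : ℂ) ^ 2 = 1 := by
    rw [show ((P.sgn σ τ₁ : ℝ) : ℂ) ^ 2 = (((P.sgn σ τ₁ ^ 2 : ℝ)) : ℂ) by push_cast; ring, hs₁sq]
    norm_num
  have hv₀0 : (2 : ℂ) * v₀ = 0 := by
    linear_combination r01 + r02 - (((P.sgn σ τ₀ : ℝ) : ℂ) * ((P.sgn σ τ₁ : ℝ) : ℂ)) * r12
      + (((P.sgn σ τ₀ : ℝ) : ℂ) * ((P.sgn σ τ₂ : ℝ) : ℂ) * v₂) * hs₁sqC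
  have hv₀z : v₀ = 0 := (mul_eq_zero.1 hv₀0).resolve_left two_ne_zero
  rw [hv₀] at hv₀z
  rcases mul_eq_zero.1 hv₀z with h | h
  · have : rc τ₀ = 0 := by exact_mod_cast h
    exact absurd this (ne_of_gt (hrc_pos τ₀))
  · exact hτ₀' h
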